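/- For every complex number k with Re k > 0 and Im k > 0 (principal square root of λ ∈ ℂ\[0,∞)) and all real t ≥ 0, |√k · e^{-√(-k)·t} − √(-k) · e^{-√k·t}| ≤ √2 · √|k|, where √(-k) and √k denote principal square roots. -/

import Mathlib

open Complex

lemma re_cpow_half_nonneg (z : ℂ) : 0 ≤ (z ^ (1 / 2 : ℂ)).re := by
  by_cases hz : z = 0
  · simp [hz, Complex.zero_cpow (by norm_num : (1 / 2 : ℂ) ≠ 0)]
  rw [Complex.cpow_def_of_ne_zero hz, Complex.exp_re]
  apply mul_nonneg (Real.exp_pos _).le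
  apply Real.cos_nonneg_of_mem_Icc
  have h1 := Complex.arg_le_pi z
  have h2 := Complex.neg_pi_lt_arg z
  have him : (Complex.log z * (1 / 2 : ℂ)).im = z.arg / 2 := by
    simp [Complex.mul_im, Complex.log_im]
    ring
  rw [him]
  constructor <;> [nlinarith [Real.pi_pos]; nlinarith [Real.pi_pos]]

lemma sq_cpow_half (z : ℂ) : (z ^ (1 / 2 : ℂ)) ^ 2 = z := by
  have := Complex.cpow_nat_inv_pow z (n := 2) (by norm_num)
  norm_num at this
  simpa using this

lemma key_real (p q : ℝ) (hp : 0 ≤ p) (hq : 0 ≤ q) :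
    Real.exp (-(2 * p)) + Real.exp (-(2 * q))
      + 2 * Real.exp (-(p + q)) * Real.sin (p + q) ≤ 2 := by
  have hs : 0 ≤ p + q := add_nonneg hp hq
  have h1 : Real.sin (p + q) ≤ p + q := Real.sin_le hs
  have h2 : p + q ≤ Real.sinh (p + q) := Real.self_le_sinh_iff.2 hs
  have hsinh : Real.sinh (p + q) = (Real.exp (p + q) - Real.exp (-(p + q))) / 2 :=
    Real.sinh_eq _
  have hmul : Real.exp (-(p + q)) * Real.exp (p + q) = 1 := by
    rw [← Real.exp_add, neg_add_cancel, Real.exp_zero]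
  have h2p : Real.exp (-(2 * p)) = Real.exp (-p) ^ 2 := by
    rw [← Real.exp_nat_mul]; ring_nf
  have h2q : Real.exp (-(2 * q)) = Real.exp (-q) ^ 2 := by
    rw [← Real.exp_nat_mul]; ring_nf
  have hpq : Real.exp (-(p + q)) = Real.exp (-p) * Real.exp (-q) := by
    rw [← Real.exp_add]; ring_nf
  have hle1p : Real.exp (-p) ≤ 1 := Real.exp_le_one_iff.2 (by linarith)
  have hle1q : Real.exp (-q) ≤ 1 := Real.exp_le_one_iff.2 (by linarith)
  have hpos : 0 < Real.exp (-(p + q)) := Real.exp_pos _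
  have hposp : 0 < Real.exp (-p) := Real.exp_pos _
  have hposq : 0 < Real.exp (-q) := Real.exp_pos _
  nlinarith [mul_nonneg (sub_nonneg.2 hle1p) (sub_nonneg.2 hle1q),
    mul_le_mul_of_nonneg_left (h1.trans h2) hpos.le]

/-- The pointwise bound on the one-dimensional biharmonic Green's function:
for `k` in the open first quadrant (the principal square root of `λ ∈ ℂ \ [0,∞)`) and
`t = |x − y| ≥ 0`, one has `|√k e^{−√(−k) t} − √(−k) e^{−√k t}| ≤ √2 √|k|`, where all
square roots are principal (`cpow (1/2)`). -/
theorem green_bound_1d (k : ℂ) (hre : 0 < k.re) (him : 0 < k.im) (t : ℝ) (ht : 0 ≤ t) :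
    ‖k ^ (1 / 2 : ℂ) * Complex.exp (-((-k) ^ (1 / 2 : ℂ)) * t)
        - (-k) ^ (1 / 2 : ℂ) * Complex.exp (-(k ^ (1 / 2 : ℂ)) * t)‖
      ≤ Real.sqrt 2 * Real.sqrt ‖k‖ := by
  set a := k ^ (1 / 2 : ℂ) with ha_def
  set b := (-k) ^ (1 / 2 : ℂ) with hb_def
  have ha2 : a ^ 2 = k := sq_cpow_half k
  have hb2 : b ^ 2 = -k := sq_cpow_half (-k)
  have hare : 0 ≤ a.re := re_cpow_half_nonneg k
  have hbre : 0 ≤ b.re := re_cpow_half_nonneg (-k)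
  -- components of a
  set x := a.re with hx_def
  set y := a.im with hy_def
  have hxy : 2 * (x * y) = k.im := by
    have h := congrArg Complex.im ha2
    rw [pow_two, Complex.mul_im] at h
    rw [hx_def, hy_def]; linarith
  have hxypos : 0 < x * y := by nlinarith
  have hxpos : 0 < x := by
    rcases hare.lt_or_eq with h | h
    · exact h
    · exfalso; rw [← h] at hxypos; simp at hxypos
  have hypos : 0 < y := by nlinarith
  -- b = -I * a
  have hb : b = -I * a := by
    have hI : (-I * a) ^ 2 = -k := by
      rw [show (-I * a) ^ 2 = I ^ 2 * a ^ 2 by ring, Complex.I_sq, ha2]; ring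
    have hfac : (b - (-I * a)) * (b + (-I * a)) = 0 := by
      have h0 : b ^ 2 - (-I * a) ^ 2 = 0 := by rw [hb2, hI]; ring
      linear_combination h0
    rcases mul_eq_zero.1 hfac with h | h
    · exact sub_eq_zero.1 h
    · exfalso
      have hbe : b = I * a := by linear_combination h
      have hbre2 : b.re = -y := by
        rw [hbe]; simp [Complex.mul_re, hy_def]
      linarith
  -- rewrite the expression
  have habs_a : ‖a‖ = Real.sqrt ‖k‖ := by
    rw [← ha2, norm_pow, Real.sqrt_sq (norm_nonneg a)]
  have hrw : a * Complex.exp (-b * t) - b * Complex.exp (-a * t)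
      = a * (Complex.exp (I * a * t) + I * Complex.exp (-a * t)) := by
    rw [hb]
    have : -(-I * a) * (t : ℂ) = I * a * t := by ring
    rw [this]; ring
  rw [hrw, norm_mul, habs_a, mul_comm (Real.sqrt 2) (Real.sqrt ‖k‖)]
  apply mul_le_mul_of_nonneg_left _ (Real.sqrt_nonneg _)
  -- bound |exp(I a t) + I exp(-a t)| ≤ √2
  have hre1 : (I * a * (t : ℂ)).re = -(y * t) := by
    simp [Complex.mul_re, Complex.mul_im, hx_def, hy_def]
  have him1 : (I * a * (t : ℂ)).im = x * t := by
    simp [Complex.mul_re, Complex.mul_im, hx_def, hy_def]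
  have hre2 : (-a * (t : ℂ)).re = -(x * t) := by
    simp [Complex.mul_re, hx_def]
  have him2 : (-a * (t : ℂ)).im = -(y * t) := by
    simp [Complex.mul_im, hy_def]
  rw [Complex.norm_def]
  apply Real.sqrt_le_sqrt
  rw [Complex.normSq_apply]
  have hzre : (Complex.exp (I * a * ↑t) + I * Complex.exp (-a * ↑t)).re
      = Real.exp (-(y * t)) * Real.cos (x * t) + Real.exp (-(x * t)) * Real.sin (y * t) := by
    simp [Complex.add_re, Complex.mul_re, Complex.exp_re, Complex.exp_im, hre1, him1, hre2, him2,
      Real.sin_neg, Real.cos_neg, hx_def, hy_def]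
  have hzim : (Complex.exp (I * a * ↑t) + I * Complex.exp (-a * ↑t)).im
      = Real.exp (-(y * t)) * Real.sin (x * t) + Real.exp (-(x * t)) * Real.cos (y * t) := by
    simp [Complex.add_im, Complex.mul_im, Complex.exp_re, Complex.exp_im, hre1, him1, hre2, him2,
      Real.sin_neg, Real.cos_neg, hx_def, hy_def]
  rw [hzre, hzim]
  have hkey := key_real (x * t) (y * t) (by positivity) (by positivity)
  have hsin := Real.sin_add (x * t) (y * t)
  have hc1 := Real.sin_sq_add_cos_sq (x * t)
  have hc2 := Real.sin_sq_add_cos_sq (y * t)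
  have he1 : Real.exp (-(2 * (x * t))) = Real.exp (-(x * t)) * Real.exp (-(x * t)) := by
    rw [← Real.exp_add]; ring_nf
  have he2 : Real.exp (-(2 * (y * t))) = Real.exp (-(y * t)) * Real.exp (-(y * t)) := by
    rw [← Real.exp_add]; ring_nf
  have he3 : Real.exp (-(x * t + y * t)) = Real.exp (-(x * t)) * Real.exp (-(y * t)) := by
    rw [← Real.exp_add]; ring_nf
  have expand :
      (Real.exp (-(y * t)) * Real.cos (x * t) + Real.exp (-(x * t)) * Real.sin (y * t)) *
          (Real.exp (-(y * t)) * Real.cos (x * t) + Real.exp (-(x * t)) * Real.sin (y * t)) +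
        (Real.exp (-(y * t)) * Real.sin (x * t) + Real.exp (-(x * t)) * Real.cos (y * t)) *
          (Real.exp (-(y * t)) * Real.sin (x * t) + Real.exp (-(x * t)) * Real.cos (y * t))
      = Real.exp (-(2 * (x * t))) + Real.exp (-(2 * (y * t)))
          + 2 * Real.exp (-(x * t + y * t)) * Real.sin (x * t + y * t) := by
    rw [he1, he2, he3, hsin]
    linear_combination Real.exp (-(y * t)) * Real.exp (-(y * t)) * hc1
      + Real.exp (-(x * t)) * Real.exp (-(x * t)) * hc2
  rw [expand]
  exact hkey
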